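/- Let N ≥ 4 and define Δ_3 = min { 2N(N−1) − N² + ℓ_1² + ℓ_2² + ℓ_3² + ℓ_1(ℓ_3 − 1) } over all compositions (ℓ_1, ℓ_2, ℓ_3) of N into positive parts with ℓ_1 ≤ ℓ_2, and Δ_4 = min { 2N(N−1) − ℓ_1(ℓ_2 + 1) − ℓ_2(N − ℓ_2) − ℓ_3(ℓ_4 + 1) − ℓ_4(N − ℓ_4) } over all compositions (ℓ_1, ℓ_2, ℓ_3, ℓ_4) of N into positive parts with ℓ_1 ≤ ℓ_2 and ℓ_3 ≤ ℓ_4. Then for every R ∈ {1, …, N}, B̄*(R) ≥ min{Δ_3, Δ_4}. -/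

import Mathlib

open scoped Classical

/-- Membership in the class 𝓛 : first column zero, both entries of the
second column nonzero. -/
def matL {F : Type*} [Field F] (B : Matrix (Fin 2) (Fin 2) F) : Prop :=
  (∀ p, B p 0 = 0) ∧ (∀ p, B p 1 ≠ 0)

/-- Membership in the class 𝓡 : second column zero, both entries of the
first column nonzero. -/
def matR {F : Type*} [Field F] (B : Matrix (Fin 2) (Fin 2) F) : Prop :=
  (∀ p, B p 1 = 0) ∧ (∀ p, B p 0 ≠ 0)

/-- Partial sums `ℓ*_r = ℓ_1 + ⋯ + ℓ_r` of a tuple `ℓ` (0-indexed: the sum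
of the entries of index `< r`). -/
def psum {R : ℕ} (ℓ : Fin R → ℕ) (r : ℕ) : ℕ :=
  ∑ k ∈ Finset.univ.filter (fun k : Fin R => (k : ℕ) < r), ℓ k

/-- The defining conditions for membership of an `R × N` array of 2×2 blocks
in the class `H(R, R_L, ℓ)`:
(i) the blocks in row `r` and columns `ℓ*_{r-1} < i ≤ ℓ*_r` (1-indexed) are
invertible;
(ii) in the first `R_L` rows every block of `𝓛 ∪ 𝓡` lies in `𝓛`, and in the
remaining rows every block of `𝓛 ∪ 𝓡` lies in `𝓡`;
(iii) no two distinct rows among the first `R_L` have two common distinct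
columns with all four blocks in `𝓛`, and no two distinct rows among the
remaining ones have two common distinct columns with all four blocks in `𝓡`. -/
def memH {F : Type*} [Field F] (N R RL : ℕ) (ℓ : Fin R → ℕ)
    (H : Fin R → Fin N → Matrix (Fin 2) (Fin 2) F) : Prop :=
  (∀ (r : Fin R) (i : Fin N),
      psum ℓ (r : ℕ) ≤ (i : ℕ) → (i : ℕ) < psum ℓ ((r : ℕ) + 1) → IsUnit (H r i)) ∧
  (∀ (r : Fin R) (j : Fin N), (r : ℕ) < RL →
      (matL (H r j) ∨ matR (H r j)) → matL (H r j)) ∧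
  (∀ (r : Fin R) (j : Fin N), RL ≤ (r : ℕ) →
      (matL (H r j) ∨ matR (H r j)) → matR (H r j)) ∧
  (¬ ∃ (r₁ r₂ : Fin R) (i j : Fin N), r₁ ≠ r₂ ∧ i ≠ j ∧
      (r₁ : ℕ) < RL ∧ (r₂ : ℕ) < RL ∧
      matL (H r₁ i) ∧ matL (H r₂ i) ∧ matL (H r₁ j) ∧ matL (H r₂ j)) ∧
  (¬ ∃ (r₁ r₂ : Fin R) (i j : Fin N), r₁ ≠ r₂ ∧ i ≠ j ∧
      RL ≤ (r₁ : ℕ) ∧ RL ≤ (r₂ : ℕ) ∧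
      matR (H r₁ i) ∧ matR (H r₂ i) ∧ matR (H r₁ j) ∧ matR (H r₂ j))

/-- `|J_r(H̄)|`, the number of columns whose block in row `r` lies in `𝓛 ∪ 𝓡`. -/
noncomputable def Jcard {F : Type*} [Field F] {N R : ℕ}
    (H : Fin R → Fin N → Matrix (Fin 2) (Fin 2) F) (r : Fin R) : ℕ :=
  (Finset.univ.filter (fun j : Fin N => matL (H r j) ∨ matR (H r j))).card

/-- The bandwidth `B(H̄) = 2N(N-1) - Σ_r ℓ_r·|J_r(H̄)|` of a configuration. -/
noncomputable def BH {F : Type*} [Field F] {R : ℕ} (N : ℕ) (ℓ : Fin R → ℕ)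
    (H : Fin R → Fin N → Matrix (Fin 2) (Fin 2) F) : ℤ :=
  2 * (N : ℤ) * ((N : ℤ) - 1) - ∑ r, (ℓ r : ℤ) * (Jcard H r : ℤ)

/-- The set of bandwidths of all configurations in
`H(R) = ⋃_{R_L, ℓ} H(R, R_L, ℓ)`. -/
def bandSet (F : Type*) [Field F] (N R : ℕ) : Set ℤ :=
  {b | ∃ (RL : ℕ) (ℓ : Fin R → ℕ)
        (H : Fin R → Fin N → Matrix (Fin 2) (Fin 2) F),
      RL ≤ R ∧ (∀ r, 1 ≤ ℓ r) ∧ (∑ r, ℓ r) = N ∧ memH N R RL ℓ H ∧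
      b = BH N ℓ H}



/-- pair certificate, case y ≤ x -/
lemma certL1 (N x y j u : ℤ) (hy : 0 ≤ y) (hyx : y ≤ x)
    (hjx : j + x ≤ N) (hu : 0 ≤ u) (huj : u + j ≤ N + 1) :
    x * j + y * u ≤ y * (x + 1) + x * (N - x) := by
  nlinarith [mul_nonneg (sub_nonneg.2 hyx) (by linarith : (0:ℤ) ≤ N - x - j),
    mul_nonneg hy (by linarith : (0:ℤ) ≤ N + 1 - j - u)]

/-- pair certificate, case x < y, m even -/
lemma certL2e (N x y j u p : ℤ) (hx : 1 ≤ x) (hxy : x < y) (hm : x + y = 2 * p)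
    (hj : 0 ≤ j) (hu : 0 ≤ u) (huj : u ≤ j) (hujN : u + j ≤ N + 1) :
    x * j + y * u ≤ p * (p + 1) + p * (N - p) := by
  have hp : 1 ≤ p := by linarith
  rcases le_or_gt (2 * j) (N + 1) with h | h
  · nlinarith [mul_nonneg (by linarith : (0:ℤ) ≤ y) (by linarith : (0:ℤ) ≤ j - u),
      mul_nonneg (by linarith : (0:ℤ) ≤ p) (by linarith : (0:ℤ) ≤ N + 1 - 2 * j)]
  · nlinarith [mul_nonneg (by linarith : (0:ℤ) ≤ y) (by linarith : (0:ℤ) ≤ N + 1 - j - u),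
      mul_nonneg (by linarith : (0:ℤ) ≤ y - x) (by linarith : (0:ℤ) ≤ 2 * j - (N + 1))]

/-- pair certificate, case x < y, m odd -/
lemma certL2o (N x y j u p : ℤ) (hx : 1 ≤ x) (hxy : x < y) (hm : x + y = 2 * p + 1)
    (hmN : x + y ≤ N - 1) (hj : 0 ≤ j) (hjx : j + x ≤ N)
    (hu : 0 ≤ u) (huj : u ≤ j) (hujN : u + j ≤ N + 1) :
    x * j + y * u ≤ p * (p + 1 + 1) + (p + 1) * (N - (p + 1)) := by
  have hxp : x ≤ p := by linarith
  rcases le_or_gt (2 * j) N with h | h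
  · nlinarith [mul_nonneg (by linarith : (0:ℤ) ≤ y) (by linarith : (0:ℤ) ≤ j - u),
      mul_nonneg (by linarith : (0:ℤ) ≤ 2 * p + 1) (by linarith : (0:ℤ) ≤ N - 2 * j)]
  rcases le_or_gt (2 * j) (N + 1) with h2 | h2
  · -- 2j = N+1
    have hj2 : 2 * j = N + 1 := le_antisymm h2 (by linarith)
    have : p + 2 ≤ j := by linarith
    nlinarith [mul_nonneg (by linarith : (0:ℤ) ≤ y) (by linarith : (0:ℤ) ≤ j - u)]
  · -- 2j ≥ N+2
    nlinarith [mul_nonneg (by linarith : (0:ℤ) ≤ y) (by linarith : (0:ℤ) ≤ N + 1 - j - u),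
      mul_nonneg (by linarith : (0:ℤ) ≤ 2 * p + 1 - 2 * x) (by linarith : (0:ℤ) ≤ N - x - j),
      mul_nonneg (by linarith : (0:ℤ) ≤ p - x) (by linarith : (0:ℤ) ≤ N - 2 * x)]

/-- single group (m = N), N = 2k -/
lemma certSGe (N x y j u k : ℤ) (hx : 1 ≤ x) (hy : 0 ≤ y) (hm : x + y = N)
    (hk : N = 2 * k) (hj : 0 ≤ j) (hjx : j + x ≤ N)
    (hu : 0 ≤ u) (huj : u ≤ j) (hujN : u + j ≤ N + 1) :
    x * j + y * u ≤ 1 * (k + 1) + k * (N - k) + (N - 1 - k) * (N - (N - 1 - k)) := by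
  have hjy : j ≤ y := by linarith
  rcases le_or_gt (2 * j) N with h | h
  · nlinarith [mul_nonneg hy (by linarith : (0:ℤ) ≤ j - u),
      mul_nonneg (by linarith : (0:ℤ) ≤ N) (by linarith : (0:ℤ) ≤ k - j)]
  · have hjk : k + 1 ≤ j := by omega
    nlinarith [mul_nonneg hy (by linarith : (0:ℤ) ≤ N + 1 - j - u),
      mul_nonneg (by linarith : (0:ℤ) ≤ y - j) (by linarith : (0:ℤ) ≤ 2 * j - N - 1),
      mul_nonneg (by linarith : (0:ℤ) ≤ j - (k + 1)) (by linarith : (0:ℤ) ≤ 2 * j - 2 * k + 1)]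

/-- single group (m = N), N = 2k+1 -/
lemma certSGo (N x y j u k : ℤ) (hx : 1 ≤ x) (hy : 0 ≤ y) (hm : x + y = N)
    (hk : N = 2 * k + 1) (hj : 0 ≤ j) (hjx : j + x ≤ N)
    (hu : 0 ≤ u) (huj : u ≤ j) (hujN : u + j ≤ N + 1) :
    x * j + y * u ≤ 1 * (k + 1) + k * (N - k) + (N - 1 - k) * (N - (N - 1 - k)) := by
  have hjy : j ≤ y := by linarith
  rcases le_or_gt (2 * j) N with h | h
  · nlinarith [mul_nonneg hy (by linarith : (0:ℤ) ≤ j - u),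
      mul_nonneg (by linarith : (0:ℤ) ≤ N) (by linarith : (0:ℤ) ≤ k - j)]
  rcases le_or_gt (2 * j) (N + 1) with h2 | h2
  · have hj2 : 2 * j = N + 1 := le_antisymm h2 (by linarith)
    nlinarith [mul_nonneg hy (by linarith : (0:ℤ) ≤ j - u)]
  · have hjk : k + 2 ≤ j := by omega
    nlinarith [mul_nonneg hy (by linarith : (0:ℤ) ≤ N + 1 - j - u),
      mul_nonneg (by linarith : (0:ℤ) ≤ y - j) (by linarith : (0:ℤ) ≤ 2 * j - N - 1),
      mul_nonneg (by linarith : (0:ℤ) ≤ j - (k + 2)) (by linarith : (0:ℤ) ≤ 2 * j - 2 * k - 1)]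

/-- a group with at least two effective rows gets a pair certificate -/
lemma pairCert (N x y j u : ℤ) (hN : 4 ≤ N) (hx : 1 ≤ x) (hy : 1 ≤ y)
    (hmN : x + y ≤ N - 1) (hj : 0 ≤ j) (hjx : j + x ≤ N)
    (hu : 0 ≤ u) (huj : u ≤ j) (hujN : u + j ≤ N + 1) :
    ∃ p q : ℤ, 1 ≤ p ∧ p ≤ q ∧ p + q = x + y ∧
      x * j + y * u ≤ p * (q + 1) + q * (N - q) := by
  rcases le_or_gt y x with hyx | hxy
  · exact ⟨y, x, hy, hyx, by ring, by
      have := certL1 N x y j u (by linarith) hyx hjx hu hujN; linarith⟩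
  · rcases Int.even_or_odd (x + y) with ⟨p, hp⟩ | ⟨p, hp⟩
    · refine ⟨p, p, by linarith, le_refl _, by linarith, ?_⟩
      exact certL2e N x y j u p hx hxy (by linarith) hj hu huj hujN
    · refine ⟨p, p + 1, by linarith, by linarith, by linarith, ?_⟩
      exact certL2o N x y j u p hx hxy (by linarith) hmN hj hjx hu huj hujN

/-- single-group certificate (m = N) -/
lemma singleCert (N x y j u : ℤ) (hN : 4 ≤ N) (hx : 1 ≤ x) (hy : 0 ≤ y)
    (hm : x + y = N) (hj : 0 ≤ j) (hjx : j + x ≤ N)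
    (hu : 0 ≤ u) (huj : u ≤ j) (hujN : u + j ≤ N + 1) :
    ∃ l1 l2 l3 : ℤ, 1 ≤ l1 ∧ 1 ≤ l2 ∧ 1 ≤ l3 ∧ l1 + l2 + l3 = N ∧ l1 ≤ l2 ∧
      x * j + y * u ≤ l1 * (l2 + 1) + l2 * (N - l2) + l3 * (N - l3) := by
  rcases Int.even_or_odd N with ⟨k, hk⟩ | ⟨k, hk⟩
  · refine ⟨1, k, N - 1 - k, le_refl _, by linarith, by linarith, by ring, by linarith, ?_⟩
    exact certSGe N x y j u k hx hy hm (by linarith) hj hjx hu huj hujN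
  · refine ⟨1, k, N - 1 - k, le_refl _, by linarith, by linarith, by ring, by linarith, ?_⟩
    exact certSGo N x y j u k hx hy hm (by linarith) hj hjx hu huj hujN

set_option maxHeartbeats 2000000 in
/-- main numeric lemma -/
lemma numeric_main (N mA SA mB SB : ℤ) (hN : 4 ≤ N)
    (hA : (mA = 0 ∧ SA ≤ 0) ∨ ∃ x y j u : ℤ, 1 ≤ x ∧ 0 ≤ y ∧ x + y = mA ∧
      0 ≤ j ∧ j + x ≤ N ∧ 0 ≤ u ∧ u ≤ j ∧ u + j ≤ N + 1 ∧ SA ≤ x * j + y * u)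
    (hB : (mB = 0 ∧ SB ≤ 0) ∨ ∃ x y j u : ℤ, 1 ≤ x ∧ 0 ≤ y ∧ x + y = mB ∧
      0 ≤ j ∧ j + x ≤ N ∧ 0 ≤ u ∧ u ≤ j ∧ u + j ≤ N + 1 ∧ SB ≤ x * j + y * u)
    (hm : mA + mB = N) :
    (∃ l1 l2 l3 : ℤ, 1 ≤ l1 ∧ 1 ≤ l2 ∧ 1 ≤ l3 ∧ l1 + l2 + l3 = N ∧ l1 ≤ l2 ∧
      SA + SB ≤ l1 * (l2 + 1) + l2 * (N - l2) + l3 * (N - l3)) ∨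
    (∃ l1 l2 l3 l4 : ℤ, 1 ≤ l1 ∧ 1 ≤ l2 ∧ 1 ≤ l3 ∧ 1 ≤ l4 ∧
      l1 + l2 + l3 + l4 = N ∧ l1 ≤ l2 ∧ l3 ≤ l4 ∧
      SA + SB ≤ l1 * (l2 + 1) + l2 * (N - l2) + l3 * (l4 + 1) + l4 * (N - l4)) := by
  rcases hA with ⟨hmA, hSA⟩ | ⟨xA, yA, jA, uA, hxA, hyA, hmA, hjA, hjxA, huA, hujA, hujNA, hSA⟩
  · rcases hB with ⟨hmB, hSB⟩ | ⟨xB, yB, jB, uB, hxB, hyB, hmB, hjB, hjxB, huB, hujB, hujNB, hSB⟩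
    · omega
    · left
      obtain ⟨l1, l2, l3, h1, h2, h3, hs, h12, hv⟩ :=
        singleCert N xB yB jB uB hN hxB hyB (by linarith) hjB hjxB huB hujB hujNB
      exact ⟨l1, l2, l3, h1, h2, h3, hs, h12, by linarith⟩
  · rcases hB with ⟨hmB, hSB⟩ | ⟨xB, yB, jB, uB, hxB, hyB, hmB, hjB, hjxB, huB, hujB, hujNB, hSB⟩
    · left
      obtain ⟨l1, l2, l3, h1, h2, h3, hs, h12, hv⟩ :=
        singleCert N xA yA jA uA hN hxA hyA (by linarith) hjA hjxA huA hujA hujNA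
      exact ⟨l1, l2, l3, h1, h2, h3, hs, h12, by linarith⟩
    · -- both groups nonempty
      have hmA1 : 1 ≤ mA := by linarith
      have hmB1 : 1 ≤ mB := by linarith
      rcases le_or_gt yA 0 with hyA0 | hyA1
      · have hyA0 : yA = 0 := le_antisymm hyA0 hyA
        rcases le_or_gt yB 0 with hyB0 | hyB1
        · -- both single
          have hyB0 : yB = 0 := le_antisymm hyB0 hyB
          left
          have hSA' : SA ≤ xA * jA := by rw [hyA0] at hSA; linarith [hSA]
          have hSB' : SB ≤ xB * jB := by rw [hyB0] at hSB; linarith [hSB]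
          rcases le_total xA xB with hab | hab
          · have hxB2 : 2 ≤ xB := by omega
            refine ⟨1, xB - 1, xA, le_refl _, by linarith, by linarith, by omega,
              by linarith, ?_⟩
            nlinarith [mul_nonneg (by linarith : (0:ℤ) ≤ xA) (by linarith : (0:ℤ) ≤ N - xA - jA),
              mul_nonneg (by linarith : (0:ℤ) ≤ xB) (by linarith : (0:ℤ) ≤ N - xB - jB)]
          · have hxA2 : 2 ≤ xA := by omega
            refine ⟨1, xA - 1, xB, le_refl _, by linarith, by linarith, by omega,
              by linarith, ?_⟩
            nlinarith [mul_nonneg (by linarith : (0:ℤ) ≤ xA) (by linarith : (0:ℤ) ≤ N - xA - jA),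
              mul_nonneg (by linarith : (0:ℤ) ≤ xB) (by linarith : (0:ℤ) ≤ N - xB - jB)]
        · -- A single, B pair
          left
          obtain ⟨p, q, hp, hpq, hs, hv⟩ := pairCert N xB yB jB uB hN hxB hyB1
            (by linarith) hjB hjxB huB hujB hujNB
          have hSA' : SA ≤ xA * jA := by rw [hyA0] at hSA; linarith [hSA]
          have hSA'' : SA ≤ xA * (N - xA) := by
            nlinarith [mul_nonneg (by linarith : (0:ℤ) ≤ xA)
              (by linarith : (0:ℤ) ≤ N - xA - jA)]
          refine ⟨p, q, xA, hp, by linarith, by linarith, by omega, hpq, by linarith⟩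
      · rcases le_or_gt yB 0 with hyB0 | hyB1
        · -- B single, A pair
          have hyB0 : yB = 0 := le_antisymm hyB0 hyB
          left
          obtain ⟨p, q, hp, hpq, hs, hv⟩ := pairCert N xA yA jA uA hN hxA hyA1
            (by linarith) hjA hjxA huA hujA hujNA
          have hSB' : SB ≤ xB * jB := by rw [hyB0] at hSB; linarith [hSB]
          have hSB'' : SB ≤ xB * (N - xB) := by
            nlinarith [mul_nonneg (by linarith : (0:ℤ) ≤ xB)
              (by linarith : (0:ℤ) ≤ N - xB - jB)]
          refine ⟨p, q, xB, hp, by linarith, by linarith, by omega, hpq, by linarith⟩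
        · -- both pair
          right
          obtain ⟨pA, qA, hpA, hpqA, hsA, hvA⟩ := pairCert N xA yA jA uA hN hxA hyA1
            (by linarith) hjA hjxA huA hujA hujNA
          obtain ⟨pB, qB, hpB, hpqB, hsB, hvB⟩ := pairCert N xB yB jB uB hN hxB hyB1
            (by linarith) hjB hjxB huB hujB hujNB
          exact ⟨pA, qA, pB, qB, hpA, by linarith, hpB, by linarith, by omega,
            hpqA, hpqB, by linarith⟩


-- helper: non-invertibility
lemma not_isUnit_of_matLR {F : Type*} [Field F] (B : Matrix (Fin 2) (Fin 2) F)
    (h : matL B ∨ matR B) : ¬ IsUnit B := by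
  intro hU
  rw [Matrix.isUnit_iff_isUnit_det, Matrix.det_fin_two] at hU
  rcases h with ⟨h0, _⟩ | ⟨h0, _⟩
  · rw [h0 0, h0 1] at hU; simp at hU
  · rw [h0 0, h0 1] at hU; simp at hU

lemma psum_succ {R : ℕ} (ℓ : Fin R → ℕ) (r : Fin R) :
    psum ℓ ((r : ℕ) + 1) = psum ℓ (r : ℕ) + ℓ r := by
  unfold psum
  have hfil : Finset.univ.filter (fun k : Fin R => (k : ℕ) < (r : ℕ) + 1) =
      insert r (Finset.univ.filter (fun k : Fin R => (k : ℕ) < (r : ℕ))) := by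
    ext k
    simp only [Finset.mem_filter, Finset.mem_univ, true_and, Finset.mem_insert, Fin.ext_iff]
    omega
  rw [hfil, Finset.sum_insert (by simp)]
  ring

lemma psum_le {R : ℕ} (ℓ : Fin R → ℕ) (m : ℕ) : psum ℓ m ≤ ∑ r, ℓ r :=
  Finset.sum_le_sum_of_subset (Finset.filter_subset _ _)

lemma diag_card {R N : ℕ} (ℓ : Fin R → ℕ) (hsum : ∑ r, ℓ r = N) (r : Fin R) :
    (Finset.univ.filter (fun i : Fin N =>
      psum ℓ (r : ℕ) ≤ (i : ℕ) ∧ (i : ℕ) < psum ℓ ((r : ℕ) + 1))).card = ℓ r := by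
  have hle : psum ℓ ((r : ℕ) + 1) ≤ N := by rw [← hsum]; exact psum_le ℓ _
  have hcard : (Finset.univ.filter (fun i : Fin N =>
      psum ℓ (r : ℕ) ≤ (i : ℕ) ∧ (i : ℕ) < psum ℓ ((r : ℕ) + 1))).card =
      (Finset.Ico (psum ℓ (r : ℕ)) (psum ℓ ((r : ℕ) + 1))).card := by
    refine Finset.card_bij (fun i _ => (i : ℕ)) ?_ ?_ ?_
    · intro a ha
      simp only [Finset.mem_filter, Finset.mem_univ, true_and] at ha
      exact Finset.mem_Ico.2 ha
    · intro a _ b _ hab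
      exact Fin.ext hab
    · intro b hb
      obtain ⟨hb1, hb2⟩ := Finset.mem_Ico.1 hb
      exact ⟨⟨b, lt_of_lt_of_le hb2 hle⟩, by
        simp only [Finset.mem_filter, Finset.mem_univ, true_and]; exact ⟨hb1, hb2⟩, rfl⟩
  rw [hcard, Nat.card_Ico, psum_succ]
  omega

lemma Jcard_le {F : Type*} [Field F] {N R RL : ℕ} {ℓ : Fin R → ℕ}
    {H : Fin R → Fin N → Matrix (Fin 2) (Fin 2) F}
    (hmem : memH N R RL ℓ H) (hsum : ∑ r, ℓ r = N) (r : Fin R) :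
    Jcard H r + ℓ r ≤ N := by
  classical
  set J := Finset.univ.filter (fun j : Fin N => matL (H r j) ∨ matR (H r j)) with hJ
  set D := Finset.univ.filter (fun i : Fin N =>
      psum ℓ (r : ℕ) ≤ (i : ℕ) ∧ (i : ℕ) < psum ℓ ((r : ℕ) + 1)) with hD
  have hdisj : Disjoint J D := by
    rw [Finset.disjoint_left]
    intro i hiJ hiD
    simp only [hJ, hD, Finset.mem_filter, Finset.mem_univ, true_and] at hiJ hiD
    exact not_isUnit_of_matLR _ hiJ (hmem.1 r i hiD.1 hiD.2)
  have hcard : J.card + D.card = (J ∪ D).card := (Finset.card_union_of_disjoint hdisj).symm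
  have hU : (J ∪ D).card ≤ N := le_trans (Finset.card_le_univ _) (by simp)
  have hDc : D.card = ℓ r := diag_card ℓ hsum r
  have : Jcard H r = J.card := rfl
  omega

lemma pair_le {F : Type*} [Field F] {N R RL : ℕ} {ℓ : Fin R → ℕ}
    {H : Fin R → Fin N → Matrix (Fin 2) (Fin 2) F}
    (hmem : memH N R RL ℓ H) {r s : Fin R} (hrs : r ≠ s)
    (hgroup : ((r : ℕ) < RL ∧ (s : ℕ) < RL) ∨ (RL ≤ (r : ℕ) ∧ RL ≤ (s : ℕ))) :
    Jcard H r + Jcard H s ≤ N + 1 := by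
  classical
  set Jr := Finset.univ.filter (fun j : Fin N => matL (H r j) ∨ matR (H r j)) with hJr
  set Js := Finset.univ.filter (fun j : Fin N => matL (H s j) ∨ matR (H s j)) with hJs
  have hinter : (Jr ∩ Js).card ≤ 1 := by
    by_contra hcon
    push_neg at hcon
    obtain ⟨i, hi, j, hj, hij⟩ := Finset.one_lt_card.mp hcon
    rw [Finset.mem_inter, hJr, hJs] at hi hj
    simp only [Finset.mem_filter, Finset.mem_univ, true_and] at hi hj
    rcases hgroup with ⟨h1, h2⟩ | ⟨h1, h2⟩
    · exact hmem.2.2.2.1 ⟨r, s, i, j, hrs, hij, h1, h2,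
        hmem.2.1 r i h1 hi.1, hmem.2.1 s i h2 hi.2,
        hmem.2.1 r j h1 hj.1, hmem.2.1 s j h2 hj.2⟩
    · exact hmem.2.2.2.2 ⟨r, s, i, j, hrs, hij, h1, h2,
        hmem.2.2.1 r i h1 hi.1, hmem.2.2.1 s i h2 hi.2,
        hmem.2.2.1 r j h1 hj.1, hmem.2.2.1 s j h2 hj.2⟩
  have hsum := Finset.card_union_add_card_inter Jr Js
  have hU : (Jr ∪ Js).card ≤ N := le_trans (Finset.card_le_univ _) (by simp)
  have h1 : Jcard H r = Jr.card := rfl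
  have h2 : Jcard H s = Js.card := rfl
  omega

lemma group_bound {F : Type*} [Field F] {N R : ℕ} (ℓ : Fin R → ℕ)
    (H : Fin R → Fin N → Matrix (Fin 2) (Fin 2) F)
    (G : Finset (Fin R)) (hpos : ∀ r, 1 ≤ ℓ r)
    (hcard : ∀ r ∈ G, Jcard H r + ℓ r ≤ N)
    (hpair : ∀ r ∈ G, ∀ s ∈ G, r ≠ s → Jcard H r + Jcard H s ≤ N + 1) :
    (∑ r ∈ G, ℓ r = 0 ∧ ∑ r ∈ G, ℓ r * Jcard H r = 0) ∨
    ∃ x y j u : ℕ, 1 ≤ x ∧ x + y = ∑ r ∈ G, ℓ r ∧ j + x ≤ N ∧ u ≤ j ∧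
      u + j ≤ N + 1 ∧ ∑ r ∈ G, ℓ r * Jcard H r ≤ x * j + y * u := by
  classical
  rcases G.eq_empty_or_nonempty with rfl | hne
  · left; simp
  · right
    obtain ⟨a, haG, hmax⟩ := G.exists_max_image (fun r => Jcard H r) hne
    have hja : Jcard H a + ℓ a ≤ N := hcard a haG
    refine ⟨ℓ a, ∑ r ∈ G.erase a, ℓ r, Jcard H a,
      min (Jcard H a) (N + 1 - Jcard H a), hpos a,
      Finset.add_sum_erase _ _ haG, by omega, min_le_left _ _, by omega, ?_⟩
    rw [← Finset.add_sum_erase _ (fun r => ℓ r * Jcard H r) haG]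
    refine Nat.add_le_add_left ?_ _
    rw [Finset.sum_mul]
    refine Finset.sum_le_sum ?_
    intro r hr
    have hrG : r ∈ G := Finset.mem_of_mem_erase hr
    have hra : r ≠ a := Finset.ne_of_mem_erase hr
    have h1 : Jcard H r ≤ Jcard H a := hmax r hrG
    have h2 : Jcard H r + Jcard H a ≤ N + 1 := hpair r hrG a haG hra
    have : Jcard H r ≤ min (Jcard H a) (N + 1 - Jcard H a) := by omega
    exact Nat.mul_le_mul_left _ this


/-- for `N ≥ 4`, with `Δ₃` the minimum of
`2N(N-1) - N² + ℓ₁² + ℓ₂² + ℓ₃² + ℓ₁(ℓ₃-1)` over compositions of `N` into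
three positive parts with `ℓ₁ ≤ ℓ₂`, and `Δ₄` the minimum of
`2N(N-1) - ℓ₁(ℓ₂+1) - ℓ₂(N-ℓ₂) - ℓ₃(ℓ₄+1) - ℓ₄(N-ℓ₄)` over compositions of
`N` into four positive parts with `ℓ₁ ≤ ℓ₂` and `ℓ₃ ≤ ℓ₄`, one has
`B̄*(R) ≥ min{Δ₃, Δ₄}` for every `R ∈ {1, …, N}`. -/
theorem statement19 (F : Type*) [Field F] [Fintype F] (N : ℕ) (hN : 4 ≤ N)
    (Δ₃ Δ₄ : ℤ)
    (h₃ : IsLeast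
      {d : ℤ | ∃ l₁ l₂ l₃ : ℕ, 1 ≤ l₁ ∧ 1 ≤ l₂ ∧ 1 ≤ l₃ ∧
        l₁ + l₂ + l₃ = N ∧ l₁ ≤ l₂ ∧
        d = 2 * (N : ℤ) * ((N : ℤ) - 1) - (N : ℤ) ^ 2 + (l₁ : ℤ) ^ 2
          + (l₂ : ℤ) ^ 2 + (l₃ : ℤ) ^ 2 + (l₁ : ℤ) * ((l₃ : ℤ) - 1)} Δ₃)
    (h₄ : IsLeast
      {d : ℤ | ∃ l₁ l₂ l₃ l₄ : ℕ, 1 ≤ l₁ ∧ 1 ≤ l₂ ∧ 1 ≤ l₃ ∧ 1 ≤ l₄ ∧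
        l₁ + l₂ + l₃ + l₄ = N ∧ l₁ ≤ l₂ ∧ l₃ ≤ l₄ ∧
        d = 2 * (N : ℤ) * ((N : ℤ) - 1) - (l₁ : ℤ) * ((l₂ : ℤ) + 1)
          - (l₂ : ℤ) * ((N : ℤ) - (l₂ : ℤ)) - (l₃ : ℤ) * ((l₄ : ℤ) + 1)
          - (l₄ : ℤ) * ((N : ℤ) - (l₄ : ℤ))} Δ₄)
    (R : ℕ) (hR1 : 1 ≤ R) (hRN : R ≤ N) :
    ∀ b ∈ bandSet F N R, min Δ₃ Δ₄ ≤ b := by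

  intro b hb
  obtain ⟨RL, ℓ, H, hRL, hpos, hsum, hmem, hbeq⟩ := hb
  classical
  set GA := Finset.univ.filter (fun r : Fin R => (r : ℕ) < RL) with hGAdef
  set GB := Finset.univ.filter (fun r : Fin R => ¬ (r : ℕ) < RL) with hGBdef
  have hsplitm : ∑ r ∈ GA, ℓ r + ∑ r ∈ GB, ℓ r = N := by
    rw [hGAdef, hGBdef, Finset.sum_filter_add_sum_filter_not]; exact hsum
  have hsplitS : ∑ r ∈ GA, ℓ r * Jcard H r + ∑ r ∈ GB, ℓ r * Jcard H r
      = ∑ r, ℓ r * Jcard H r := by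
    rw [hGAdef, hGBdef, Finset.sum_filter_add_sum_filter_not]
  have hGAmem : ∀ r ∈ GA, (r : ℕ) < RL := by
    intro r hr; rw [hGAdef, Finset.mem_filter] at hr; exact hr.2
  have hGBmem : ∀ r ∈ GB, RL ≤ (r : ℕ) := by
    intro r hr; rw [hGBdef, Finset.mem_filter] at hr; exact Nat.le_of_not_lt hr.2
  have hA := group_bound ℓ H GA hpos (fun r _ => Jcard_le hmem hsum r)
      (fun r hr s hs hrs => pair_le hmem hrs (Or.inl ⟨hGAmem r hr, hGAmem s hs⟩))
  have hB := group_bound ℓ H GB hpos (fun r _ => Jcard_le hmem hsum r)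
      (fun r hr s hs hrs => pair_le hmem hrs (Or.inr ⟨hGBmem r hr, hGBmem s hs⟩))
  -- cast the two group certificates to ℤ
  have hA' : (((∑ r ∈ GA, ℓ r : ℕ) : ℤ) = 0 ∧ ((∑ r ∈ GA, ℓ r * Jcard H r : ℕ) : ℤ) ≤ 0) ∨
      ∃ x y j u : ℤ, 1 ≤ x ∧ 0 ≤ y ∧ x + y = ((∑ r ∈ GA, ℓ r : ℕ) : ℤ) ∧
      0 ≤ j ∧ j + x ≤ (N : ℤ) ∧ 0 ≤ u ∧ u ≤ j ∧ u + j ≤ (N : ℤ) + 1 ∧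
      ((∑ r ∈ GA, ℓ r * Jcard H r : ℕ) : ℤ) ≤ x * j + y * u := by
    rcases hA with ⟨h1, h2⟩ | ⟨x, y, j, u, c1, c2, c3, c4, c5, c6⟩
    · left; constructor <;> exact_mod_cast (by omega : _)
    · right; exact ⟨(x : ℤ), (y : ℤ), (j : ℤ), (u : ℤ), by exact_mod_cast c1,
        Int.ofNat_nonneg y, by exact_mod_cast c2, Int.ofNat_nonneg j,
        by exact_mod_cast c3, Int.ofNat_nonneg u, by exact_mod_cast c4,
        by exact_mod_cast c5, by exact_mod_cast c6⟩
  have hB' : (((∑ r ∈ GB, ℓ r : ℕ) : ℤ) = 0 ∧ ((∑ r ∈ GB, ℓ r * Jcard H r : ℕ) : ℤ) ≤ 0) ∨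
      ∃ x y j u : ℤ, 1 ≤ x ∧ 0 ≤ y ∧ x + y = ((∑ r ∈ GB, ℓ r : ℕ) : ℤ) ∧
      0 ≤ j ∧ j + x ≤ (N : ℤ) ∧ 0 ≤ u ∧ u ≤ j ∧ u + j ≤ (N : ℤ) + 1 ∧
      ((∑ r ∈ GB, ℓ r * Jcard H r : ℕ) : ℤ) ≤ x * j + y * u := by
    rcases hB with ⟨h1, h2⟩ | ⟨x, y, j, u, c1, c2, c3, c4, c5, c6⟩
    · left; constructor <;> exact_mod_cast (by omega : _)
    · right; exact ⟨(x : ℤ), (y : ℤ), (j : ℤ), (u : ℤ), by exact_mod_cast c1,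
        Int.ofNat_nonneg y, by exact_mod_cast c2, Int.ofNat_nonneg j,
        by exact_mod_cast c3, Int.ofNat_nonneg u, by exact_mod_cast c4,
        by exact_mod_cast c5, by exact_mod_cast c6⟩
  have hmain := numeric_main (N : ℤ) _ _ _ _ (by exact_mod_cast hN) hA' hB'
      (by exact_mod_cast hsplitm)
  have hStot : ((∑ r ∈ GA, ℓ r * Jcard H r : ℕ) : ℤ) + ((∑ r ∈ GB, ℓ r * Jcard H r : ℕ) : ℤ)
      = ∑ r, (ℓ r : ℤ) * (Jcard H r : ℤ) := by
    exact_mod_cast hsplitS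
  rw [hbeq]
  unfold BH
  rcases hmain with ⟨l1, l2, l3, h1, h2, h3, hsum3, h12, hval⟩ |
      ⟨l1, l2, l3, l4, h1, h2, h3, h4, hsum4, h12, h34, hval⟩
  · have hd : Δ₃ ≤ 2 * (N : ℤ) * ((N : ℤ) - 1) - (N : ℤ) ^ 2 + (l1.toNat : ℤ) ^ 2
        + (l2.toNat : ℤ) ^ 2 + (l3.toNat : ℤ) ^ 2 + (l1.toNat : ℤ) * ((l3.toNat : ℤ) - 1) :=
      h₃.2 ⟨l1.toNat, l2.toNat, l3.toNat, by omega, by omega, by omega, by omega, by omega, rfl⟩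
    have e1 : (l1.toNat : ℤ) = l1 := Int.toNat_of_nonneg (by linarith)
    have e2 : (l2.toNat : ℤ) = l2 := Int.toNat_of_nonneg (by linarith)
    have e3 : (l3.toNat : ℤ) = l3 := Int.toNat_of_nonneg (by linarith)
    rw [e1, e2, e3] at hd
    have hid : (N : ℤ) ^ 2 - l1 ^ 2 - l2 ^ 2 - l3 ^ 2 - l1 * (l3 - 1)
        = l1 * (l2 + 1) + l2 * ((N : ℤ) - l2) + l3 * ((N : ℤ) - l3) := by
      rw [← hsum3]; ring
    refine le_trans (min_le_left _ _) (le_trans hd ?_)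
    rw [← hStot] at *
    linarith [hval, hid]
  · have hd : Δ₄ ≤ 2 * (N : ℤ) * ((N : ℤ) - 1) - (l1.toNat : ℤ) * ((l2.toNat : ℤ) + 1)
        - (l2.toNat : ℤ) * ((N : ℤ) - (l2.toNat : ℤ)) - (l3.toNat : ℤ) * ((l4.toNat : ℤ) + 1)
        - (l4.toNat : ℤ) * ((N : ℤ) - (l4.toNat : ℤ)) :=
      h₄.2 ⟨l1.toNat, l2.toNat, l3.toNat, l4.toNat, by omega, by omega, by omega, by omega,
        by omega, by omega, by omega, rfl⟩
    have e1 : (l1.toNat : ℤ) = l1 := Int.toNat_of_nonneg (by linarith)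
    have e2 : (l2.toNat : ℤ) = l2 := Int.toNat_of_nonneg (by linarith)
    have e3 : (l3.toNat : ℤ) = l3 := Int.toNat_of_nonneg (by linarith)
    have e4 : (l4.toNat : ℤ) = l4 := Int.toNat_of_nonneg (by linarith)
    rw [e1, e2, e3, e4] at hd
    refine le_trans (min_le_right _ _) (le_trans hd ?_)
    rw [← hStot] at *
    linarith [hval]
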